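/- In M₂(ℂ), let γ₁ := diag(1,0), γ₂ := diag(0,1), U := diag(e^{i}, 1), θ(x) := U x U*, and ρ := diag(λ, 1−λ) for λ ∈ ℝ with 0 ≤ λ ≤ 1. For n ≥ 1 and a tuple i : Fin n → Fin 2 set P_i := Tr(Γ_i ρ Γ_i*) with Γ_i := θⁿ(γ_{i(n)}) ⋯ θ(γ_{i(1)}), and define S_n := ∑_{i : Fin n → Fin 2} (−(Re P_i) · log(Re P_i)) with the convention 0 · log 0 = 0. Then for every n ≥ 1, S_n = −λ log λ − (1−λ) log(1−λ). -/

import Mathlib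

open Matrix BigOperators

/-- The partition of unity `γ₁ = diag(1,0)`, `γ₂ = diag(0,1)` of the spin model. -/
noncomputable def spinGamma : Fin 2 → Matrix (Fin 2) (Fin 2) ℂ :=
  ![!![1, 0; 0, 0], !![0, 0; 0, 1]]

/-- The unitary `U = diag(eⁱ, 1)` implementing the evolution `θ(x) = U x Uᴴ`. -/
noncomputable def spinU : Matrix (Fin 2) (Fin 2) ℂ :=
  !![Complex.exp Complex.I, 0; 0, 1]

/-- The density matrix `ρ = diag(λ, 1−λ)`. -/
noncomputable def spinRho (l : ℝ) : Matrix (Fin 2) (Fin 2) ℂ :=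
  !![(l : ℂ), 0; 0, 1 - (l : ℂ)]

/-- `Γ_i = θⁿ(γ_{i(n)}) θ^{n−1}(γ_{i(n−1)}) ⋯ θ(γ_{i(1)})` where `θᵏ(x) = Uᵏ x (Uᵏ)ᴴ`. -/
noncomputable def spinGammaOp (n : ℕ) (i : Fin n → Fin 2) : Matrix (Fin 2) (Fin 2) ℂ :=
  (List.ofFn fun k : Fin n =>
    spinU ^ ((Fin.rev k : ℕ) + 1) * spinGamma (i (Fin.rev k)) *
      (spinU ^ ((Fin.rev k : ℕ) + 1))ᴴ).prod

/-- The `n`-step entropy `S_n = ∑_i −(Re P_i) log (Re P_i)` with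
`P_i = Tr(Γ_i ρ Γ_iᴴ)` and the convention `0 log 0 = 0`. -/
noncomputable def spinEntropy (l : ℝ) (n : ℕ) : ℝ :=
  ∑ i : Fin n → Fin 2,
    Real.negMulLog ((spinGammaOp n i * spinRho l * (spinGammaOp n i)ᴴ).trace.re)

lemma gamma_mul (a b : Fin 2) : spinGamma a * spinGamma b = if a = b then spinGamma a else 0 := by
  fin_cases a <;> fin_cases b <;>
    · ext x y
      fin_cases x <;> fin_cases y <;>
        simp [spinGamma, Matrix.mul_apply, Fin.sum_univ_two]

lemma U_conj (j : Fin 2) : spinU * spinGamma j * spinUᴴ = spinGamma j := by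
  have h : Complex.exp Complex.I * (starRingEnd ℂ) (Complex.exp Complex.I) = 1 := by
    rw [← Complex.exp_conj, ← Complex.exp_add]
    simp
  fin_cases j <;>
    · ext x y
      fin_cases x <;> fin_cases y <;>
        simp [spinGamma, spinU, Matrix.mul_apply, Fin.sum_univ_two, h]

lemma Upow_conj (m : ℕ) (j : Fin 2) : spinU ^ m * spinGamma j * (spinU ^ m)ᴴ = spinGamma j := by
  induction m with
  | zero => simp
  | succ k ih =>
    rw [pow_succ, conjTranspose_mul]
    calc spinU ^ k * spinU * spinGamma j * (spinUᴴ * (spinU ^ k)ᴴ)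
        = spinU ^ k * (spinU * spinGamma j * spinUᴴ) * (spinU ^ k)ᴴ := by noncomm_ring
      _ = spinGamma j := by rw [U_conj]; exact ih

lemma prod_cons (L : List (Fin 2)) : ∀ c : Fin 2,
    ((c :: L).map spinGamma).prod = if ∀ x ∈ L, x = c then spinGamma c else 0 := by
  induction L with
  | nil => intro c; simp
  | cons d T ih =>
    intro c
    rw [List.map_cons, List.prod_cons, show ((d :: T).map spinGamma).prod = _ from ih d]
    by_cases hT : ∀ x ∈ T, x = d
    · rw [if_pos hT, gamma_mul]
      by_cases hcd : c = d
      · subst hcd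
        rw [if_pos rfl, if_pos]
        intro x hx
        rcases List.mem_cons.mp hx with h | h
        · exact h
        · exact hT x h
      · rw [if_neg hcd, if_neg]
        intro h
        exact hcd (h d List.mem_cons_self).symm
    · rw [if_neg hT, mul_zero, if_neg]
      intro h
      have h1 := h d List.mem_cons_self
      exact hT fun x hx => (h x (List.mem_cons_of_mem d hx)).trans h1.symm

lemma gammaOp_eq (m : ℕ) (i : Fin (m + 1) → Fin 2) :
    spinGammaOp (m + 1) i =
      if ∀ k, i k = i (Fin.last m) then spinGamma (i (Fin.last m)) else 0 := by
  have h1 : spinGammaOp (m + 1) i =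
      ((List.ofFn fun k : Fin (m + 1) => i (Fin.rev k)).map spinGamma).prod := by
    rw [List.map_ofFn]
    unfold spinGammaOp
    exact congrArg (fun f => (List.ofFn f).prod)
      (funext fun k => Upow_conj ((Fin.rev k : ℕ) + 1) (i (Fin.rev k)))
  rw [h1, List.ofFn_succ, prod_cons, Fin.rev_zero]
  by_cases hc : ∀ k, i k = i (Fin.last m)
  · rw [if_pos hc, if_pos]
    intro x hx
    obtain ⟨k, rfl⟩ := List.mem_ofFn.mp hx
    exact (hc _).trans (hc _).symm
  · rw [if_neg hc, if_neg]
    intro h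
    apply hc
    intro k
    have hall : ∀ j : Fin (m + 1), i (Fin.rev j) = i (Fin.last m) := by
      intro j
      induction j using Fin.cases with
      | zero => rw [Fin.rev_zero]
      | succ j => exact h _ (List.mem_ofFn.mpr ⟨j, rfl⟩)
    have := hall (Fin.rev k)
    rwa [Fin.rev_rev] at this

lemma trace0 (l : ℝ) : ((spinGamma 0 * spinRho l * (spinGamma 0)ᴴ).trace.re) = l := by
  simp [spinGamma, spinRho, Matrix.trace_fin_two, Matrix.mul_apply, Fin.sum_univ_two,
    Matrix.conjTranspose_apply, Matrix.vecMul, dotProduct, Matrix.vecHead, Matrix.vecTail]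

lemma trace1 (l : ℝ) : ((spinGamma 1 * spinRho l * (spinGamma 1)ᴴ).trace.re) = 1 - l := by
  simp [spinGamma, spinRho, Matrix.trace_fin_two, Matrix.mul_apply, Fin.sum_univ_two,
    Matrix.conjTranspose_apply, Matrix.vecMul, dotProduct, Matrix.vecHead, Matrix.vecTail]

/-- for every `n ≥ 1`, `S_n = −λ log λ − (1−λ) log (1−λ)`. -/
theorem stmt13 (l : ℝ) (hl0 : 0 ≤ l) (hl1 : l ≤ 1) (n : ℕ) (hn : 1 ≤ n) :
    spinEntropy l n = Real.negMulLog l + Real.negMulLog (1 - l) := by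
  obtain ⟨m, rfl⟩ : ∃ m, n = m + 1 := ⟨n - 1, by omega⟩
  have hne : (fun _ : Fin (m + 1) => (0 : Fin 2)) ≠ (fun _ => 1) := by
    intro h
    exact absurd (congrFun h (Fin.last m)) (by decide)
  have key : ∀ i : Fin (m + 1) → Fin 2,
      Real.negMulLog ((spinGammaOp (m + 1) i * spinRho l * (spinGammaOp (m + 1) i)ᴴ).trace.re)
      = (if i = (fun _ => 0) then Real.negMulLog l else 0)
        + (if i = (fun _ => 1) then Real.negMulLog (1 - l) else 0) := by
    intro i
    rw [gammaOp_eq]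
    by_cases hc : ∀ k, i k = i (Fin.last m)
    · rw [if_pos hc]
      have hi : i = fun _ => i (Fin.last m) := funext hc
      have hlt := (i (Fin.last m)).isLt
      rcases (by omega : (i (Fin.last m) : ℕ) = 0 ∨ (i (Fin.last m) : ℕ) = 1) with h | h
      · have h0 : i (Fin.last m) = 0 := Fin.ext h
        rw [h0] at hi
        rw [h0, trace0, if_pos hi, if_neg (fun hh => hne (hi.symm.trans hh)), add_zero]
      · have h1 : i (Fin.last m) = 1 := Fin.ext h
        rw [h1] at hi
        rw [h1, trace1, if_pos hi, if_neg (fun hh => hne (hh.symm.trans hi)), zero_add]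
    · rw [if_neg hc]
      rw [if_neg (fun h => hc fun k => by rw [h]), if_neg (fun h => hc fun k => by rw [h])]
      simp [Real.negMulLog_zero]
  rw [spinEntropy, Finset.sum_congr rfl fun i _ => key i, Finset.sum_add_distrib,
    Finset.sum_ite_eq' Finset.univ (fun _ : Fin (m+1) => (0 : Fin 2)) (fun _ => Real.negMulLog l),
    Finset.sum_ite_eq' Finset.univ (fun _ : Fin (m+1) => (1 : Fin 2)) (fun _ => Real.negMulLog (1 - l))]
  simp
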